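/- Let t₀ < t₁ < t₂ with I₁ = [t₀,t₁], I₂ = [t₁,t₂], and let {φ_{1,1}, φ_{1,2}, φ_{1,3}} and {φ_{2,1}, φ_{2,2}, φ_{2,3}} be the standard quadratic Lagrange bases on I₁ and I₂ (nodes: the two endpoints and the midpoint of each element). Let β, q be continuous on [t₀,t₂] and let e be continuous on [t₀,t₂] and continuously differentiable on I₁ and on I₂. Assume the two orthogonality relations: ∫_{I₂} (β e' φ_{2,2}' + q e φ_{2,2}) dx = 0, and ∫_{I₁} (β e' φ_{1,3}' + q e φ_{1,3}) dx + ∫_{I₂} (β e' φ_{2,1}' + q e φ_{2,1}) dx = 0. Define E₁ = -∫_{I₁} β e' φ_{1,3}' dx - ∫_{I₁} q e φ_{1,3} dx and E₂ = -∫_{I₂} β e' φ_{2,3}' dx - ∫_{I₂} q e φ_{2,3} dx. Then E₂ - E₁ = -∫_{I₂} q e dx. -/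
import Mathlib


open Set intervalIntegral

private lemma deriv_quad (a b c : ℝ) :
    deriv (fun x => ((x - a) * (x - b)) / c) =
      fun x => ((x - b) + (x - a)) / c := by
  funext x
  have h1 : HasDerivAt (fun x : ℝ => x - a) 1 x := (hasDerivAt_id x).sub_const a
  have h2 : HasDerivAt (fun x : ℝ => x - b) 1 x := (hasDerivAt_id x).sub_const b
  have h := (h1.mul h2).div_const c
  have h' : HasDerivAt (fun x => ((x - a) * (x - b)) / c) (((x - b) + (x - a)) / c) x := by
    simpa [one_mul, mul_one, add_comm] using h
  exact h'.deriv

/-- Telescoping identity for the recovered flux errors at consecutive end nodes: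
with the two Galerkin orthogonality relations (midpoint basis of `I₂` and end-node
basis at `t₁`), the flux errors satisfy `E₂ - E₁ = -∫_{I₂} q e`. -/
theorem stmt_14 (t0 t1 t2 : ℝ) (h01 : t0 < t1) (h12 : t1 < t2)
    (β q e e1 e2 : ℝ → ℝ)
    (hβ : ContinuousOn β (Icc t0 t2)) (hq : ContinuousOn q (Icc t0 t2))
    (hec : ContinuousOn e (Icc t0 t2))
    (he1 : ∀ x ∈ Icc t0 t1, HasDerivWithinAt e (e1 x) (Icc t0 t1) x)
    (he1c : ContinuousOn e1 (Icc t0 t1))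
    (he2 : ∀ x ∈ Icc t1 t2, HasDerivWithinAt e (e2 x) (Icc t1 t2) x)
    (he2c : ContinuousOn e2 (Icc t1 t2)) :
    let m1 := (t0 + t1) / 2
    let m2 := (t1 + t2) / 2
    -- standard quadratic Lagrange bases on I₁ = [t0,t1] and I₂ = [t1,t2]
    let φ13 : ℝ → ℝ := fun x => ((x - t0) * (x - m1)) / ((t1 - t0) * (t1 - m1))
    let φ21 : ℝ → ℝ := fun x => ((x - m2) * (x - t2)) / ((t1 - m2) * (t1 - t2))
    let φ22 : ℝ → ℝ := fun x => ((x - t1) * (x - t2)) / ((m2 - t1) * (m2 - t2))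
    let φ23 : ℝ → ℝ := fun x => ((x - t1) * (x - m2)) / ((t2 - t1) * (t2 - m2))
    -- orthogonality against the midpoint basis function of I₂
    (∫ x in t1..t2, (β x * e2 x * deriv φ22 x + q x * e x * φ22 x)) = 0 →
    -- orthogonality against the global end-node basis function at t₁
    (∫ x in t0..t1, (β x * e1 x * deriv φ13 x + q x * e x * φ13 x))
      + (∫ x in t1..t2, (β x * e2 x * deriv φ21 x + q x * e x * φ21 x)) = 0 →
    -- conclusion: E₂ - E₁ = -∫_{I₂} q e
    ((-∫ x in t1..t2, β x * e2 x * deriv φ23 x) - ∫ x in t1..t2, q x * e x * φ23 x)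
      - ((-∫ x in t0..t1, β x * e1 x * deriv φ13 x) - ∫ x in t0..t1, q x * e x * φ13 x)
      = -∫ x in t1..t2, q x * e x := by
  intro m1 m2 φ13 φ21 φ22 φ23 horth1 horth2
  have hm1 : m1 = (t0 + t1) / 2 := rfl
  have hm2 : m2 = (t1 + t2) / 2 := rfl
  have d13 : deriv φ13 = fun x => ((x - m1) + (x - t0)) / ((t1 - t0) * (t1 - m1)) :=
    deriv_quad t0 m1 _
  have d21 : deriv φ21 = fun x => ((x - t2) + (x - m2)) / ((t1 - m2) * (t1 - t2)) :=
    deriv_quad m2 t2 _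
  have d22 : deriv φ22 = fun x => ((x - t2) + (x - t1)) / ((m2 - t1) * (m2 - t2)) :=
    deriv_quad t1 t2 _
  have d23 : deriv φ23 = fun x => ((x - m2) + (x - t1)) / ((t2 - t1) * (t2 - m2)) :=
    deriv_quad t1 m2 _
  -- nonvanishing denominators
  have h2 : t1 - t2 ≠ 0 := sub_ne_zero.2 h12.ne
  have h5 : t2 - t1 ≠ 0 := sub_ne_zero.2 h12.ne'
  have h1 : t1 - m2 ≠ 0 := by rw [hm2]; intro h; apply h2; linarith
  have h3 : m2 - t1 ≠ 0 := by rw [hm2]; intro h; apply h2; linarith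
  have h4 : m2 - t2 ≠ 0 := by rw [hm2]; intro h; apply h2; linarith
  have h6 : t2 - m2 ≠ 0 := by rw [hm2]; intro h; apply h2; linarith
  -- continuity / integrability on I₂
  have hsub2 : Icc t1 t2 ⊆ Icc t0 t2 := Icc_subset_Icc h01.le le_rfl
  have hsub1 : Icc t0 t1 ⊆ Icc t0 t2 := Icc_subset_Icc le_rfl h12.le
  have hintA : ∀ g : ℝ → ℝ, Continuous g →
      IntervalIntegrable (fun x => β x * e2 x * g x) MeasureTheory.volume t1 t2 := by
    intro g hg
    exact (((hβ.mono hsub2).mul he2c).mul hg.continuousOn).intervalIntegrable_of_Icc h12.le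
  have hintB : ∀ g : ℝ → ℝ, Continuous g →
      IntervalIntegrable (fun x => q x * e x * g x) MeasureTheory.volume t1 t2 := by
    intro g hg
    exact (((hq.mono hsub2).mul (hec.mono hsub2)).mul
      hg.continuousOn).intervalIntegrable_of_Icc h12.le
  have hintD : ∀ g : ℝ → ℝ, Continuous g →
      IntervalIntegrable (fun x => β x * e1 x * g x) MeasureTheory.volume t0 t1 := by
    intro g hg
    exact (((hβ.mono hsub1).mul he1c).mul hg.continuousOn).intervalIntegrable_of_Icc h01.le
  have hintF : ∀ g : ℝ → ℝ, Continuous g →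
      IntervalIntegrable (fun x => q x * e x * g x) MeasureTheory.volume t0 t1 := by
    intro g hg
    exact (((hq.mono hsub1).mul (hec.mono hsub1)).mul
      hg.continuousOn).intervalIntegrable_of_Icc h01.le
  -- the explicit integrand pieces
  have hA1 := hintA (fun x => ((x - t2) + (x - m2)) / ((t1 - m2) * (t1 - t2))) ((((continuous_id.sub continuous_const).add ((continuous_id).sub continuous_const)).div_const _))
  have hA2 := hintA (fun x => ((x - t2) + (x - t1)) / ((m2 - t1) * (m2 - t2))) ((((continuous_id.sub continuous_const).add ((continuous_id).sub continuous_const)).div_const _))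
  have hA3 := hintA (fun x => ((x - m2) + (x - t1)) / ((t2 - t1) * (t2 - m2))) ((((continuous_id.sub continuous_const).add ((continuous_id).sub continuous_const)).div_const _))
  have hB1 := hintB (fun x => ((x - m2) * (x - t2)) / ((t1 - m2) * (t1 - t2))) ((((continuous_id.sub continuous_const).mul ((continuous_id).sub continuous_const)).div_const _))
  have hB2 := hintB (fun x => ((x - t1) * (x - t2)) / ((m2 - t1) * (m2 - t2))) ((((continuous_id.sub continuous_const).mul ((continuous_id).sub continuous_const)).div_const _))
  have hB3 := hintB (fun x => ((x - t1) * (x - m2)) / ((t2 - t1) * (t2 - m2))) ((((continuous_id.sub continuous_const).mul ((continuous_id).sub continuous_const)).div_const _))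
  have hD := hintD (fun x => ((x - m1) + (x - t0)) / ((t1 - t0) * (t1 - m1))) ((((continuous_id.sub continuous_const).add ((continuous_id).sub continuous_const)).div_const _))
  have hF := hintF (fun x => ((x - t0) * (x - m1)) / ((t1 - t0) * (t1 - m1))) ((((continuous_id.sub continuous_const).mul ((continuous_id).sub continuous_const)).div_const _))
  simp only [φ13, φ21, φ22, φ23, d13, d21, d22, d23] at horth1 horth2 ⊢
  -- split orthogonality relations
  rw [integral_add hA2 hB2] at horth1
  rw [integral_add hD hF, integral_add hA1 hB1] at horth2
  -- sum of derivatives of the I₂ basis is zero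
  have sumA : (∫ x in t1..t2,
        (β x * e2 x * (((x - t2) + (x - m2)) / ((t1 - m2) * (t1 - t2)))
          + β x * e2 x * (((x - t2) + (x - t1)) / ((m2 - t1) * (m2 - t2)))
          + β x * e2 x * (((x - m2) + (x - t1)) / ((t2 - t1) * (t2 - m2))))) = 0 := by
    have h0 : ∀ x : ℝ,
        β x * e2 x * (((x - t2) + (x - m2)) / ((t1 - m2) * (t1 - t2)))
          + β x * e2 x * (((x - t2) + (x - t1)) / ((m2 - t1) * (m2 - t2)))
          + β x * e2 x * (((x - m2) + (x - t1)) / ((t2 - t1) * (t2 - m2))) = 0 := by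
      intro x
      have hs : ((x - t2) + (x - m2)) / ((t1 - m2) * (t1 - t2))
          + ((x - t2) + (x - t1)) / ((m2 - t1) * (m2 - t2))
          + ((x - m2) + (x - t1)) / ((t2 - t1) * (t2 - m2)) = 0 := by
        field_simp
        ring
      calc β x * e2 x * (((x - t2) + (x - m2)) / ((t1 - m2) * (t1 - t2)))
            + β x * e2 x * (((x - t2) + (x - t1)) / ((m2 - t1) * (m2 - t2)))
            + β x * e2 x * (((x - m2) + (x - t1)) / ((t2 - t1) * (t2 - m2)))
          = β x * e2 x * (((x - t2) + (x - m2)) / ((t1 - m2) * (t1 - t2))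
              + ((x - t2) + (x - t1)) / ((m2 - t1) * (m2 - t2))
              + ((x - m2) + (x - t1)) / ((t2 - t1) * (t2 - m2))) := by ring
        _ = 0 := by rw [hs]; ring
    simp only [h0, integral_zero]
  rw [integral_add (hA1.add hA2) hA3, integral_add hA1 hA2] at sumA
  -- the I₂ basis functions sum to one
  have sumB : (∫ x in t1..t2,
        (q x * e x * (((x - m2) * (x - t2)) / ((t1 - m2) * (t1 - t2)))
          + q x * e x * (((x - t1) * (x - t2)) / ((m2 - t1) * (m2 - t2)))
          + q x * e x * (((x - t1) * (x - m2)) / ((t2 - t1) * (t2 - m2)))))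
      = ∫ x in t1..t2, q x * e x := by
    apply integral_congr
    intro x _
    have hs : ((x - m2) * (x - t2)) / ((t1 - m2) * (t1 - t2))
        + ((x - t1) * (x - t2)) / ((m2 - t1) * (m2 - t2))
        + ((x - t1) * (x - m2)) / ((t2 - t1) * (t2 - m2)) = 1 := by
      field_simp
      ring
    calc q x * e x * (((x - m2) * (x - t2)) / ((t1 - m2) * (t1 - t2)))
          + q x * e x * (((x - t1) * (x - t2)) / ((m2 - t1) * (m2 - t2)))
          + q x * e x * (((x - t1) * (x - m2)) / ((t2 - t1) * (t2 - m2)))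
        = q x * e x * (((x - m2) * (x - t2)) / ((t1 - m2) * (t1 - t2))
            + ((x - t1) * (x - t2)) / ((m2 - t1) * (m2 - t2))
            + ((x - t1) * (x - m2)) / ((t2 - t1) * (t2 - m2))) := by ring
      _ = q x * e x := by rw [hs]; ring
  rw [integral_add (hB1.add hB2) hB3, integral_add hB1 hB2] at sumB
  linarith [horth1, horth2, sumA, sumB]
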